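/- Let L be a Lie ring whose derived ideal L' = [L, L] is abelian, nonzero, not contained in the center of L, and minimal in the sense that the only ideals of L contained in L' are 0 and L'. Then for every x ∈ L that does not centralize L': (i) ad_x restricts to a bijection of L' onto itself; (ii) L = L' ⊕ C_L(x) as additive groups; (iii) C_L(x) is an abelian Cartan subring of L (abelian, nilpotent and self-normalizing). -/
import Mathlib


/-- Let `L` be a Lie ring whose derived ideal `L'` is abelian, nonzero, not
contained in the center of `L`, and minimal (the only ideals of `L` contained in `L'` are
`0` and `L'`).  Then for every `x ∈ L` not centralizing `L'`:
(i) `ad_x` restricts to a bijection of `L'` onto itself;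
(ii) `L = L' ⊕ C_L(x)` as additive groups;
(iii) `C_L(x)` is an abelian Cartan subring (abelian, nilpotent and self-normalizing). -/
theorem stmt_7 {L : Type*} [LieRing L]
    (habel : ∀ a ∈ LieAlgebra.derivedSeries ℤ L 1, ∀ b ∈ LieAlgebra.derivedSeries ℤ L 1,
      ⁅a, b⁆ = (0 : L))
    (hne : ∃ w ∈ LieAlgebra.derivedSeries ℤ L 1, w ≠ (0 : L))
    (hnc : ¬ ∀ w ∈ LieAlgebra.derivedSeries ℤ L 1, ∀ y : L, ⁅y, w⁆ = 0)
    (hmin : ∀ J : LieIdeal ℤ L, J ≤ LieAlgebra.derivedSeries ℤ L 1 →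
      J = ⊥ ∨ J = LieAlgebra.derivedSeries ℤ L 1)
    (x : L) (hx : ¬ ∀ z ∈ LieAlgebra.derivedSeries ℤ L 1, ⁅x, z⁆ = 0) :
    -- (i) ad_x restricts to a bijection of L' onto itself
    ((∀ z ∈ LieAlgebra.derivedSeries ℤ L 1, ⁅x, z⁆ ∈ LieAlgebra.derivedSeries ℤ L 1) ∧
     (∀ z ∈ LieAlgebra.derivedSeries ℤ L 1, ∀ w ∈ LieAlgebra.derivedSeries ℤ L 1,
        ⁅x, z⁆ = ⁅x, w⁆ → z = w) ∧
     (∀ w ∈ LieAlgebra.derivedSeries ℤ L 1,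
        ∃ z ∈ LieAlgebra.derivedSeries ℤ L 1, ⁅x, z⁆ = w)) ∧
    -- (ii) L = L' ⊕ C_L(x)
    ((∀ y : L, ∃ z ∈ LieAlgebra.derivedSeries ℤ L 1, ∃ c : L, ⁅x, c⁆ = 0 ∧ y = z + c) ∧
     (∀ z ∈ LieAlgebra.derivedSeries ℤ L 1, ⁅x, z⁆ = 0 → z = 0)) ∧
    -- (iii) C_L(x) is an abelian Cartan subring: abelian and self-normalizing subring
    (∃ c : LieSubalgebra ℤ L, (c : Set L) = {y : L | ⁅x, y⁆ = 0} ∧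
      (∀ a ∈ c, ∀ b ∈ c, ⁅a, b⁆ = (0 : L)) ∧ c.normalizer = c) := by
  set D := LieAlgebra.derivedSeries ℤ L 1 with hD
  -- every bracket lies in D
  have hDmem : ∀ y z : L, ⁅y, z⁆ ∈ D := by
    intro y z
    rw [hD, LieAlgebra.derivedSeries_def, LieAlgebra.derivedSeriesOfIdeal_succ]
    exact LieSubmodule.lie_mem_lie (LieSubmodule.mem_top y) (LieSubmodule.mem_top z)
  -- the kernel ideal
  let K : LieIdeal ℤ L :=
    { carrier := {z | z ∈ D ∧ ⁅x, z⁆ = 0}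
      add_mem' := by
        rintro a b ⟨ha, ha'⟩ ⟨hb, hb'⟩
        exact ⟨D.add_mem ha hb, by rw [lie_add, ha', hb', add_zero]⟩
      zero_mem' := ⟨D.zero_mem, by rw [lie_zero]⟩
      smul_mem' := by
        rintro n a ⟨ha, ha'⟩
        exact ⟨D.smul_mem n ha, by rw [lie_smul, ha', smul_zero]⟩
      lie_mem := by
        rintro y z ⟨hz, hz'⟩
        refine ⟨hDmem y z, ?_⟩
        rw [leibniz_lie, hz', lie_zero, add_zero]
        exact habel _ (hDmem x y) _ hz }
  have hKle : K ≤ D := fun z hz => hz.1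
  have hKbot : K = ⊥ := by
    rcases hmin K hKle with h | h
    · exact h
    · exfalso; exact hx (fun z hz => ((h ▸ hz : z ∈ K)).2)
  have hinj : ∀ z ∈ D, ⁅x, z⁆ = 0 → z = 0 := by
    intro z hz h
    have : z ∈ K := ⟨hz, h⟩
    rw [hKbot] at this
    exact this
  -- the image ideal
  let I : LieIdeal ℤ L :=
    { carrier := {w | ∃ z ∈ D, ⁅x, z⁆ = w}
      add_mem' := by
        rintro a b ⟨za, hza, ha⟩ ⟨zb, hzb, hb⟩
        exact ⟨za + zb, D.add_mem hza hzb, by rw [lie_add, ha, hb]⟩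
      zero_mem' := ⟨0, D.zero_mem, lie_zero x⟩
      smul_mem' := by
        rintro n a ⟨za, hza, ha⟩
        exact ⟨n • za, D.smul_mem n hza, by rw [lie_smul, ha]⟩
      lie_mem := by
        rintro y w ⟨z, hz, hzw⟩
        refine ⟨⁅y, z⁆, hDmem y z, ?_⟩
        rw [← hzw, leibniz_lie]
        have h0 : ⁅⁅x, y⁆, z⁆ = 0 := habel _ (hDmem x y) _ hz
        rw [h0, zero_add] }
  have hIle : I ≤ D := by rintro w ⟨z, hz, hzw⟩; exact hzw ▸ hDmem x z
  have hID : I = D := by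
    rcases hmin I hIle with h | h
    · exfalso
      apply hx
      intro z hz
      by_contra hne0
      have : ⁅x, z⁆ ∈ I := ⟨z, hz, rfl⟩
      rw [h] at this
      exact hne0 this
    · exact h
  have hsurj : ∀ w ∈ D, ∃ z ∈ D, ⁅x, z⁆ = w := by
    intro w hw
    rw [← hID] at hw
    exact hw
  -- decomposition
  have hdec : ∀ y : L, ∃ z ∈ D, ∃ c : L, ⁅x, c⁆ = 0 ∧ y = z + c := by
    intro y
    obtain ⟨z, hz, hzw⟩ := hsurj ⁅x, y⁆ (hDmem x y)
    refine ⟨z, hz, y - z, ?_, by abel⟩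
    rw [lie_sub, hzw, sub_self]
  -- the centralizer subalgebra
  let c : LieSubalgebra ℤ L :=
    { carrier := {y | ⁅x, y⁆ = 0}
      add_mem' := fun {a b} ha hb => by
        simp only [Set.mem_setOf_eq] at *; rw [lie_add, ha, hb, add_zero]
      zero_mem' := lie_zero x
      smul_mem' := fun n a ha => by
        simp only [Set.mem_setOf_eq] at *; rw [lie_smul, ha, smul_zero]
      lie_mem' := fun {a b} ha hb => by
        simp only [Set.mem_setOf_eq] at *
        rw [leibniz_lie, ha, hb, zero_lie, lie_zero, add_zero] }
  have hcmem : ∀ y : L, y ∈ c ↔ ⁅x, y⁆ = 0 := fun y => Iff.rfl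
  have hcab : ∀ a ∈ c, ∀ b ∈ c, ⁅a, b⁆ = (0 : L) := by
    intro a ha b hb
    apply hinj _ (hDmem a b)
    rw [leibniz_lie, (hcmem a).mp ha, (hcmem b).mp hb, zero_lie, lie_zero, add_zero]
  have hnorm : c.normalizer = c := by
    apply le_antisymm _ c.le_normalizer
    intro y hy
    rw [LieSubalgebra.mem_normalizer_iff] at hy
    have hxc : x ∈ c := (hcmem x).mpr (lie_self x)
    have h1 : ⁅y, x⁆ ∈ c := hy x hxc
    have h1' : ⁅x, ⁅y, x⁆⁆ = 0 := (hcmem _).mp h1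
    have h2 : ⁅x, ⁅x, y⁆⁆ = 0 := by
      have e : ⁅x, ⁅x, y⁆⁆ = ⁅x, -⁅y, x⁆⁆ := by rw [lie_skew]
      rw [e, lie_neg, h1', neg_zero]
    exact (hcmem y).mpr (hinj _ (hDmem x y) h2)
  refine ⟨⟨fun z _ => hDmem x z, ?_, hsurj⟩, ⟨hdec, hinj⟩, c, rfl, hcab, hnorm⟩
  intro z hz w hw h
  have : z - w ∈ D := D.sub_mem hz hw
  have h0 : ⁅x, z - w⁆ = 0 := by rw [lie_sub, h, sub_self]
  exact sub_eq_zero.mp (hinj _ this h0)
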